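/- Let N ≥ 1, let A be an N×N real matrix with nonnegative entries and zero diagonal, and let L = D − A be the associated Laplacian, where D is diagonal with D_{ii} = Σ_j A_{ij}. Then every complex eigenvalue μ of L (viewing L as a complex matrix) satisfies Re μ ≥ 0, and moreover if Re μ = 0 then μ = 0; that is, every nonzero eigenvalue of L has strictly positive real part. -/

import Mathlib

theorem laplacian_eigenvalues_nonneg_real_part
    (N : ℕ) (hN : 1 ≤ N) (A : Matrix (Fin N) (Fin N) ℝ)
    (hnonneg : ∀ i j, 0 ≤ A i j) (hdiag : ∀ i, A i i = 0)
    (L : Matrix (Fin N) (Fin N) ℝ)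
    (hL : L = Matrix.diagonal (fun i => ∑ j, A i j) - A)
    (μ : ℂ) (w : Fin N → ℂ) (hw : w ≠ 0)
    (heig : (L.map Complex.ofReal).mulVec w = μ • w) :
    0 ≤ μ.re ∧ (μ.re = 0 → μ = 0) := by
  -- set up eigenvalue
  have hev : Module.End.HasEigenvalue (Matrix.toLin' (L.map Complex.ofReal)) μ := by
    apply Module.End.hasEigenvalue_of_hasEigenvector (x := w)
    refine ⟨Module.End.mem_eigenspace_iff.mpr ?_, hw⟩
    simpa [Matrix.toLin'_apply] using heig
  obtain ⟨k, hk⟩ := eigenvalue_mem_ball hev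
  set d : ℝ := ∑ j, A k j with hd
  have hd0 : 0 ≤ d := Finset.sum_nonneg fun j _ => hnonneg k j
  have hdiagk : (L.map Complex.ofReal) k k = (d : ℂ) := by
    simp [hL, Matrix.diagonal, hdiag k, hd]
  have hrad : (∑ j ∈ Finset.univ.erase k, ‖(L.map Complex.ofReal) k j‖) = d := by
    rw [hd, ← Finset.add_sum_erase _ _ (Finset.mem_univ k), hdiag k, zero_add]
    apply Finset.sum_congr rfl
    intro j hj
    have hjk : j ≠ k := Finset.ne_of_mem_erase hj
    simp [hL, Matrix.diagonal, Ne.symm hjk, Complex.norm_real, abs_of_nonneg (hnonneg k j)]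
  rw [Metric.mem_closedBall, hdiagk, hrad] at hk
  have hk2 : ‖μ - d‖ ≤ d := by rw [dist_eq_norm] at hk; exact hk
  have hsq : (μ.re - d)^2 + μ.im^2 ≤ d^2 := by
    have h1 : ‖μ - d‖ ^ 2 = (μ.re - d)^2 + μ.im^2 := by
      rw [Complex.sq_norm, Complex.normSq_apply]
      simp [Complex.sub_re, Complex.sub_im]
      ring
    nlinarith [norm_nonneg (μ - d)]
  have hkey : μ.re^2 + μ.im^2 ≤ 2 * d * μ.re := by nlinarith
  constructor
  · nlinarith [sq_nonneg μ.re, sq_nonneg μ.im]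
  · intro hre
    have him : μ.im = 0 := by nlinarith [sq_nonneg μ.im]
    exact Complex.ext hre him
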